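/- In the (3,1,4) scenario, any classical strategy satisfies the facet inequality p(2|1) + p(1|3) + p(3|1) + p(4|2) ≤ 3D, where p(z|x) = Σ_m p_e(m|x) p_d(z|m), z ∈ {1,2,3,4}, x ∈ {1,2,3}, and D = (1/3) Σ_m max_x p_e(m|x). -/
import Mathlib

open BigOperators

/-- (3,1,4) scenario: with Alice's inputs `x ∈ {1,2,3}` (here `0,1,2`) and Bob's outputs
`z ∈ {1,2,3,4}` (here `0,1,2,3`), any classical strategy obeys the facet inequality
`p(2|1) + p(1|3) + p(3|1) + p(4|2) ≤ 3D`. -/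
theorem stmt11 (M : Type*) [Fintype M]
    (pe : M → Fin 3 → ℝ) (hpe0 : ∀ m x, 0 ≤ pe m x)
    (hpe1 : ∀ x, ∑ m, pe m x = 1)
    (pd : Fin 4 → M → ℝ) (hpd0 : ∀ z m, 0 ≤ pd z m)
    (hpd1 : ∀ m, ∑ z, pd z m = 1)
    (p : Fin 4 → Fin 3 → ℝ)
    (hp : ∀ z x, p z x = ∑ m, pe m x * pd z m)
    (D : ℝ)
    (hD : D = (1 / 3 : ℝ) * ∑ m, Finset.univ.sup' Finset.univ_nonempty fun x => pe m x) :
    p 1 0 + p 0 2 + p 2 0 + p 3 1 ≤ 3 * D := by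
  have key : ∀ m : M, pe m 0 * pd 1 m + pe m 2 * pd 0 m + pe m 0 * pd 2 m + pe m 1 * pd 3 m
      ≤ Finset.univ.sup' Finset.univ_nonempty fun x => pe m x := by
    intro m
    set S := Finset.univ.sup' Finset.univ_nonempty fun x => pe m x with hS
    have h0 : pe m 0 ≤ S := Finset.le_sup' _ (Finset.mem_univ 0)
    have h1 : pe m 1 ≤ S := Finset.le_sup' _ (Finset.mem_univ 1)
    have h2 : pe m 2 ≤ S := Finset.le_sup' _ (Finset.mem_univ 2)
    have hsum : pd 0 m + pd 1 m + pd 2 m + pd 3 m = 1 := by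
      have := hpd1 m
      simpa [Fin.sum_univ_four] using this
    have step : pe m 0 * pd 1 m + pe m 2 * pd 0 m + pe m 0 * pd 2 m + pe m 1 * pd 3 m
        ≤ S * pd 1 m + S * pd 0 m + S * pd 2 m + S * pd 3 m := by
      gcongr <;> first | exact hpd0 _ _ | assumption
    calc _ ≤ S * pd 1 m + S * pd 0 m + S * pd 2 m + S * pd 3 m := step
      _ = S * (pd 0 m + pd 1 m + pd 2 m + pd 3 m) := by ring
      _ = S := by rw [hsum, mul_one]
  have hlhs : p 1 0 + p 0 2 + p 2 0 + p 3 1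
      = ∑ m, (pe m 0 * pd 1 m + pe m 2 * pd 0 m + pe m 0 * pd 2 m + pe m 1 * pd 3 m) := by
    simp [hp, Finset.sum_add_distrib]
  rw [hlhs, hD]
  have : ∑ m, (pe m 0 * pd 1 m + pe m 2 * pd 0 m + pe m 0 * pd 2 m + pe m 1 * pd 3 m)
      ≤ ∑ m, Finset.univ.sup' Finset.univ_nonempty fun x => pe m x :=
    Finset.sum_le_sum (fun m _ => key m)
  linarith [this]
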